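/- With the same setup (cop sweeping the path $P_n$ from vertex 0, drunk robber starting uniformly at random), there is a constant $C$ such that for all $n \ge 2$, $\mathbb{E}T_n \ge \frac{n}{2}\left(1 - C\frac{\log n}{n}\right)$. Consequently $\mathbb{E}T_n = (1+o(1)) n/2$. -/

import Mathlib

set_option linter.unusedSectionVars false

open MeasureTheory ProbabilityTheory Finset Filter
open scoped ENNReal

section Aux

variable {Ω : Type} [MeasurableSpace Ω] (μ : Measure Ω) [IsProbabilityMeasure μ]
variable (n : ℕ) (ξ : ℕ → Ω → Bool) (K : Ω → ℕ)

/-- deterministic recursion for Z -/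
def zf (n : ℕ) : ℕ → ℕ → (ℕ → Bool) → ℤ
  | 0, k, _ => (k : ℤ)
  | (t+1), k, f =>
      if zf n t k f = (n : ℤ) - 1 - t then zf n t k f - 2
      else if f t then zf n t k f - 2 else zf n t k f

lemma zf_congr (n : ℕ) : ∀ (t : ℕ) (k : ℕ) (f g : ℕ → Bool),
    (∀ i < t, f i = g i) → zf n t k f = zf n t k g
  | 0, k, f, g, _ => rfl
  | (t+1), k, f, g, h => by
      have ih : zf n t k f = zf n t k g :=
        zf_congr n t k f g (fun i hi => h i (Nat.lt_succ_of_lt hi))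
      simp only [zf, ih, h t (Nat.lt_succ_self t)]

/-- sum of ±1 increments -/
def sfun (t : ℕ) (f : ℕ → Bool) : ℤ := ∑ s ∈ range t, (if f s then (1 : ℤ) else -1)

lemma sfun_congr (t : ℕ) (f g : ℕ → Bool) (h : ∀ i < t, f i = g i) :
    sfun t f = sfun t g := by
  unfold sfun
  exact Finset.sum_congr rfl (fun s hs => by rw [h s (mem_range.mp hs)])

end Aux

section Ind
variable {Ω : Type} [MeasurableSpace Ω] (μ : Measure Ω) [IsProbabilityMeasure μ]
variable (n : ℕ) (ξ : ℕ → Ω → Bool) (K : Ω → ℕ)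
variable (hξm : ∀ i, Measurable (ξ i))
  (hξi : iIndepFun ξ μ)
  (hξh : ∀ i, μ {ω | ξ i ω = true} = 1 / 2)
  (hKm : Measurable K) (hKlt : ∀ ω, K ω < n)
  (hKu : ∀ j < n, μ {ω | K ω = j} = (n : ℝ≥0∞)⁻¹)
  (hKξ : IndepFun K (fun ω => fun i => ξ i ω) μ)

omit [IsProbabilityMeasure μ] in
include hξm in
lemma meas_Q1 (t : ℕ) (P : (ℕ → Bool) → Prop)
    (hP : ∀ f g, (∀ i < t, f i = g i) → P f → P g) :
    MeasurableSet {ω | P (fun i => ξ i ω)} := by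
  have hset : {ω | P (fun i => ξ i ω)} =
      (fun ω => fun i => ξ i ω) ⁻¹' {f : ℕ → Bool | P f} := rfl
  have hTk : MeasurableSet {f : ℕ → Bool | P f} := by
    have hset2 : {f : ℕ → Bool | P f} =
        (fun (f : ℕ → Bool) (i : Fin t) => f i) ⁻¹'
          {v : Fin t → Bool | P (fun i => if h : i < t then v ⟨i, h⟩ else false)} := by
      ext f
      simp only [Set.mem_setOf_eq, Set.mem_preimage]
      exact ⟨fun hf => hP f _ (fun i hi => by simp [hi]) hf,
             fun hf => hP _ f (fun i hi => by simp [hi]) hf⟩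
    rw [hset2]
    exact measurable_pi_lambda _ (fun i => measurable_pi_apply _)
      ((Set.to_countable _).measurableSet)
  rw [hset]
  exact (measurable_pi_lambda _ hξm) hTk

omit [IsProbabilityMeasure μ] in
include hξm hKm in
lemma meas_Q (t : ℕ) (Q : ℕ → (ℕ → Bool) → Prop)
    (hQ : ∀ k f g, (∀ i < t, f i = g i) → Q k f → Q k g) :
    MeasurableSet {ω | Q (K ω) (fun i => ξ i ω)} := by
  have : {ω | Q (K ω) (fun i => ξ i ω)} =
      ⋃ k : ℕ, ({ω | K ω = k} ∩ {ω | Q k (fun i => ξ i ω)}) := by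
    ext ω
    simp only [Set.mem_setOf_eq, Set.mem_iUnion, Set.mem_inter_iff]
    exact ⟨fun h => ⟨K ω, rfl, h⟩, fun ⟨k, hk, h⟩ => by rwa [hk]⟩
  rw [this]
  exact MeasurableSet.iUnion fun k =>
    (hKm (MeasurableSet.singleton k)).inter (meas_Q1 ξ hξm t (Q k) (hQ k))

include hξm hξh in
lemma half (i : ℕ) (b : Bool) : μ {ω | ξ i ω = b} = 1 / 2 := by
  cases b
  · have h1 : {ω | ξ i ω = false} = {ω | ξ i ω = true}ᶜ := by
      ext ω; simp [Bool.not_eq_true]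
    have h2 : MeasurableSet {ω | ξ i ω = true} := (hξm i) (MeasurableSet.singleton true)
    rw [h1, prob_compl_eq_one_sub h2, hξh i, one_div, ENNReal.one_sub_inv_two]
  · exact hξh i

include hξm hξi hξh hKm hKlt hKξ in
/-- Key independence lemma. -/
lemma ind (t : ℕ) (Q : ℕ → (ℕ → Bool) → Prop)
    (hQ : ∀ k f g, (∀ i < t, f i = g i) → Q k f → Q k g) (b : Bool) :
    μ {ω | Q (K ω) (fun i => ξ i ω) ∧ ξ t ω = b}
      = μ {ω | Q (K ω) (fun i => ξ i ω)} / 2 := by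
  classical
  have hξvm : Measurable (fun ω => fun i => ξ i ω : Ω → ℕ → Bool) :=
    measurable_pi_lambda _ hξm
  have hTk : ∀ k : ℕ, MeasurableSet {f : ℕ → Bool | Q k f} := by
    intro k
    have hset2 : {f : ℕ → Bool | Q k f} =
        (fun (f : ℕ → Bool) (i : Fin t) => f i) ⁻¹'
          {v : Fin t → Bool | Q k (fun i => if h : i < t then v ⟨i, h⟩ else false)} := by
      ext f
      simp only [Set.mem_setOf_eq, Set.mem_preimage]
      exact ⟨fun hf => hQ k f _ (fun i hi => by simp [hi]) hf,
             fun hf => hQ k _ f (fun i hi => by simp [hi]) hf⟩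
    rw [hset2]
    exact measurable_pi_lambda _ (fun i => measurable_pi_apply _)
      ((Set.to_countable _).measurableSet)
  -- independence of the block ξ_{<t} and the coin ξ_t
  have hblock : IndepFun (fun ω (i : ↥(Finset.range t)) => ξ i ω)
      (fun ω (i : ↥({t} : Finset ℕ)) => ξ i ω) μ :=
    hξi.indepFun_finset (Finset.range t) {t}
      (by simp [Finset.disjoint_singleton_right]) hξm
  have step2 : ∀ (k : ℕ) (b : Bool),
      μ ((fun ω => fun i => ξ i ω) ⁻¹' {f | Q k f} ∩ {ω | ξ t ω = b})
      = μ ((fun ω => fun i => ξ i ω) ⁻¹' {f | Q k f}) * μ {ω | ξ t ω = b} := by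
    intro k b
    have h1 : (fun ω => fun i => ξ i ω) ⁻¹' {f | Q k f} =
        (fun ω (i : ↥(Finset.range t)) => ξ i ω) ⁻¹'
          {v : ↥(Finset.range t) → Bool |
            Q k (fun i => if h : i ∈ Finset.range t then v ⟨i, h⟩ else false)} := by
      ext ω
      simp only [Set.mem_preimage, Set.mem_setOf_eq]
      exact ⟨fun hf => hQ k _ _ (fun i hi => by simp [Finset.mem_range, hi]) hf,
             fun hf => hQ k _ _ (fun i hi => by simp [Finset.mem_range, hi]) hf⟩
    have h2 : {ω | ξ t ω = b} =
        (fun ω (i : ↥({t} : Finset ℕ)) => ξ i ω) ⁻¹'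
          {v : ↥({t} : Finset ℕ) → Bool | v ⟨t, Finset.mem_singleton_self t⟩ = b} := by
      ext ω; simp
    rw [h1, h2]
    exact hblock.measure_inter_preimage_eq_mul _ _
      ((Set.to_countable _).measurableSet) ((Set.to_countable _).measurableSet)
  -- step 1: independence of K and ξ-events
  have step1 : ∀ (k : ℕ) (S : Set (ℕ → Bool)), MeasurableSet S →
      μ ({ω | K ω = k} ∩ (fun ω => fun i => ξ i ω) ⁻¹' S)
      = μ {ω | K ω = k} * μ ((fun ω => fun i => ξ i ω) ⁻¹' S) := by
    intro k S hS
    have := hKξ.measure_inter_preimage_eq_mul {k} S (MeasurableSet.singleton k) hS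
    exact this
  have hevalb : MeasurableSet {f : ℕ → Bool | f t = b} := by
    have : {f : ℕ → Bool | f t = b} = (fun f : ℕ → Bool => f t) ⁻¹' {b} := rfl
    rw [this]; exact measurable_pi_apply t (MeasurableSet.singleton b)
  -- decompose over values of K
  have decomp : ∀ (R : Set Ω), MeasurableSet R →
      μ {ω | Q (K ω) (fun i => ξ i ω) ∧ ω ∈ R}
      = ∑ k ∈ Finset.range n,
          μ ({ω | K ω = k} ∩ ((fun ω => fun i => ξ i ω) ⁻¹' {f | Q k f} ∩ R)) := by
    intro R hR
    have hset : {ω | Q (K ω) (fun i => ξ i ω) ∧ ω ∈ R} =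
        ⋃ k ∈ Finset.range n,
          ({ω | K ω = k} ∩ ((fun ω => fun i => ξ i ω) ⁻¹' {f | Q k f} ∩ R)) := by
      ext ω
      simp only [Set.mem_setOf_eq, Set.mem_iUnion, Set.mem_inter_iff, Set.mem_preimage,
        Finset.mem_range, exists_prop]
      constructor
      · rintro ⟨hq, hr⟩
        exact ⟨K ω, hKlt ω, rfl, hq, hr⟩
      · rintro ⟨k, _, hk, hq, hr⟩
        rw [← hk] at hq
        exact ⟨hq, hr⟩
    rw [hset]
    refine measure_biUnion_finset ?_ ?_
    · intro a _ c _ hac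
      refine Set.disjoint_left.mpr ?_
      rintro ω ⟨ha, -⟩ ⟨hc, -⟩
      exact hac (ha.symm.trans hc)
    · intro k _
      exact (hKm (MeasurableSet.singleton k)).inter ((hξvm (hTk k)).inter hR)
  have hAb := decomp {ω | ξ t ω = b} ((hξm t) (MeasurableSet.singleton b))
  have hAu := decomp Set.univ MeasurableSet.univ
  simp only [Set.mem_setOf_eq] at hAb
  simp only [Set.mem_univ, and_true, Set.inter_univ] at hAu
  rw [hAb, hAu, div_eq_mul_inv, Finset.sum_mul]
  refine Finset.sum_congr rfl ?_
  intro k _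
  have e1 : (fun ω => fun i => ξ i ω) ⁻¹' {f | Q k f} ∩ {ω | ξ t ω = b}
      = (fun ω => fun i => ξ i ω) ⁻¹' {f | Q k f ∧ f t = b} := by
    ext ω; simp [Set.mem_preimage]
  have h1 := step1 k {f | Q k f ∧ f t = b} ((hTk k).inter hevalb)
  have h2 := step1 k {f | Q k f} (hTk k)
  rw [e1, h1, ← e1, step2 k b, half μ ξ hξm hξh t b, h2, one_div, ← mul_assoc]

variable (Z : ℕ → Ω → ℤ)
  (hZm : ∀ t, Measurable (Z t))
  (hZ0 : ∀ ω, Z 0 ω = (K ω : ℤ))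
  (hZrec : ∀ t ω, Z (t + 1) ω =
      if Z t ω = (n : ℤ) - 1 - t then Z t ω - 2
      else if ξ t ω then Z t ω - 2 else Z t ω)

omit [IsProbabilityMeasure μ] in
include hZ0 hZrec in
lemma hZeq : ∀ (t : ℕ) (ω : Ω), Z t ω = zf n t (K ω) (fun i => ξ i ω) := by
  intro t
  induction t with
  | zero => intro ω; rw [hZ0]; rfl
  | succ t ih =>
      intro ω
      rw [hZrec t ω, ih ω]
      rfl

include hZrec in
omit [IsProbabilityMeasure μ] in
lemma Zstep : ∀ (t : ℕ) (ω : Ω), Z (t + 1) ω =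
    if (Z t ω = (n : ℤ) - 1 - t ∨ ξ t ω = true) then Z t ω - 2 else Z t ω := by
  intro t ω
  rw [hZrec t ω]
  by_cases h1 : Z t ω = (n : ℤ) - 1 - t
  · simp [h1]
  · by_cases h2 : ξ t ω = true <;> simp [h1, h2]

include hZ0 hZrec hKlt in
omit [IsProbabilityMeasure μ] in
lemma hZle : ∀ (t : ℕ) (ω : Ω), Z t ω ≤ (n : ℤ) - 1 - t := by
  intro t
  induction t with
  | zero =>
      intro ω
      rw [hZ0]
      have := hKlt ω
      push_cast
      omega
  | succ t ih =>
      intro ω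
      rw [Zstep n ξ Z hZrec t ω]
      by_cases h : (Z t ω = (n : ℤ) - 1 - t ∨ ξ t ω = true)
      · simp only [h, if_true]
        have := ih ω
        push_cast
        omega
      · simp only [h, if_false]
        have h1 : Z t ω ≠ (n : ℤ) - 1 - t := fun hc => h (Or.inl hc)
        have := ih ω
        push_cast
        omega

include hZ0 hZrec hKlt in
omit [IsProbabilityMeasure μ] in
lemma Zfinal (hn : 1 ≤ n) : ∀ ω, Z (n - 1) ω ≤ 0 := by
  intro ω
  have := hZle n ξ K hKlt Z hZ0 hZrec (n - 1) ω
  have hcast : ((n - 1 : ℕ) : ℤ) = (n : ℤ) - 1 := by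
    have : (1 : ℕ) ≤ n := hn
    push_cast [this]
    ring
  rw [hcast] at this
  omega

include hZ0 hZrec in
omit [IsProbabilityMeasure μ] in
lemma telescope : ∀ (m : ℕ) (ω : Ω), Z m ω = (K ω : ℤ) -
    2 * ∑ t ∈ range m, (if (Z t ω = (n : ℤ) - 1 - t ∨ ξ t ω = true) then (1 : ℤ) else 0) := by
  intro m
  induction m with
  | zero => intro ω; simpa using hZ0 ω
  | succ m ih =>
      intro ω
      rw [Finset.sum_range_succ, Zstep n ξ Z hZrec m ω]
      by_cases h : (Z m ω = (n : ℤ) - 1 - m ∨ ξ m ω = true)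
      · simp only [h, if_true]
        rw [ih ω]; ring
      · simp only [h, if_false]
        rw [ih ω]; ring

open Classical in
noncomputable def tauOf (ω : Ω) : ℕ := sInf {t | Z t ω ≤ 0}

open Classical in
noncomputable def Nf (ω : Ω) : ℕ :=
  ∑ t ∈ range (n - 1),
    if ((∀ s ≤ t, 0 < Z s ω) ∧ (Z t ω = (n : ℤ) - 1 - t ∨ ξ t ω = true)) then 1 else 0

omit [IsProbabilityMeasure μ] in
include hZ0 hZrec hKlt in
lemma tau_le (hn : 1 ≤ n) (ω : Ω) : tauOf Z ω ≤ n - 1 :=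
  Nat.sInf_le (Zfinal n ξ K hKlt Z hZ0 hZrec hn ω)

omit [IsProbabilityMeasure μ] in
include hZ0 hZrec hKlt in
lemma tauZ (hn : 1 ≤ n) (ω : Ω) : Z (tauOf Z ω) ω ≤ 0 :=
  Nat.sInf_mem (⟨n - 1, Zfinal n ξ K hKlt Z hZ0 hZrec hn ω⟩ : {t | Z t ω ≤ 0}.Nonempty)

omit [IsProbabilityMeasure μ] in
include hZ0 hZrec hKlt in
lemma lt_tau (hn : 1 ≤ n) (t : ℕ) (ω : Ω) : t < tauOf Z ω ↔ ∀ s ≤ t, 0 < Z s ω := by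
  unfold tauOf
  constructor
  · intro h s hs
    by_contra hc
    push_neg at hc
    have := Nat.sInf_le (show s ∈ {t | Z t ω ≤ 0} from hc)
    omega
  · intro h
    by_contra hc
    push_neg at hc
    have hne : {t | Z t ω ≤ 0}.Nonempty :=
      ⟨n - 1, Zfinal n ξ K hKlt Z hZ0 hZrec hn ω⟩
    have hmem := Nat.sInf_mem hne
    simp only [Set.mem_setOf_eq] at hmem
    have := h _ hc
    omega

omit [IsProbabilityMeasure μ] in
include hZ0 hZrec hKlt in
lemma tauZ_ge (hn : 1 ≤ n) (ω : Ω) : -1 ≤ Z (tauOf Z ω) ω := by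
  cases h : tauOf Z ω with
  | zero => rw [hZ0]; omega
  | succ u =>
      rw [Zstep n ξ Z hZrec u ω]
      have hu_lt : u < tauOf Z ω := by omega
      have hZu : 0 < Z u ω :=
        ((lt_tau (hn := hn) (t := u) (ω := ω) (hKlt := hKlt) (hZ0 := hZ0)
          (hZrec := hZrec)).mp hu_lt) u le_rfl
      split <;> omega

omit [IsProbabilityMeasure μ] in
include hZ0 hZrec hKlt in
lemma pathwise (hn : 1 ≤ n) (ω : Ω) : K ω ≤ 2 * Nf n ξ Z ω ∧ 2 * Nf n ξ Z ω ≤ K ω + 1 := by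
  classical
  set τ := tauOf Z ω with hτ
  have hτle : τ ≤ n - 1 := tau_le n ξ K hKlt Z hZ0 hZrec hn ω
  have hsum : Nf n ξ Z ω = ∑ t ∈ range τ,
      (if (Z t ω = (n : ℤ) - 1 - t ∨ ξ t ω = true) then 1 else 0) := by
    unfold Nf
    rw [← Finset.sum_subset (Finset.range_subset_range.mpr hτle)]
    · refine Finset.sum_congr rfl ?_
      intro t ht
      have htτ : t < τ := mem_range.mp ht
      have hB : ∀ s ≤ t, 0 < Z s ω :=
        ((lt_tau (hn := hn) (t := t) (ω := ω) (hKlt := hKlt) (hZ0 := hZ0)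
          (hZrec := hZrec)).mp htτ)
      exact if_congr (and_iff_right hB) rfl rfl
    · intro t _ ht
      have htτ : ¬ t < τ := fun hc => ht (mem_range.mpr hc)
      have hnot : ¬ (∀ s ≤ t, 0 < Z s ω) := fun hc =>
        htτ ((lt_tau (hn := hn) (t := t) (ω := ω) (hKlt := hKlt) (hZ0 := hZ0)
          (hZrec := hZrec)).mpr hc)
      simp [hnot]
  have htel := telescope n ξ K Z hZ0 hZrec τ ω
  have hcast : (∑ t ∈ range τ, (if (Z t ω = (n : ℤ) - 1 - t ∨ ξ t ω = true) then (1:ℤ) else 0))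
      = ((∑ t ∈ range τ, (if (Z t ω = (n : ℤ) - 1 - t ∨ ξ t ω = true) then (1:ℕ) else 0) : ℕ) : ℤ) := by
    push_cast [apply_ite]
    rfl
  rw [hcast, ← hsum] at htel
  have h1 : Z τ ω ≤ 0 := tauZ n ξ K hKlt Z hZ0 hZrec hn ω
  have h2 : -1 ≤ Z τ ω := tauZ_ge (hn := hn) (ω := ω) (hKlt := hKlt) (hZ0 := hZ0) (hZrec := hZrec)
  omega

noncomputable def bfun (t : ℕ) (m : ℤ) : ℝ≥0∞ := μ {ω | sfun t (fun i => ξ i ω) = m}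

noncomputable def ellfun (t : ℕ) (m : ℤ) : ℝ≥0∞ :=
  (∑ j ∈ range n, bfun μ ξ t (m - j)) * (n : ℝ≥0∞)⁻¹

omit [IsProbabilityMeasure μ] in
include hξm in
lemma meas_sfun (t : ℕ) (m : ℤ) : MeasurableSet {ω | sfun t (fun i => ξ i ω) = m} :=
  meas_Q1 ξ hξm t (fun f => sfun t f = m)
    (fun f g h hf => by show sfun t g = m; rw [← sfun_congr t f g h]; exact hf)

include hξm hξi hξh hKm hKlt hKξ in
lemma bfun_rec (t : ℕ) (m : ℤ) :
    bfun μ ξ (t+1) m = bfun μ ξ t (m - 1) / 2 + bfun μ ξ t (m + 1) / 2 := by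
  classical
  have hsplit : {ω | sfun (t+1) (fun i => ξ i ω) = m} =
      ({ω | sfun t (fun i => ξ i ω) = m - 1 ∧ ξ t ω = true} ∪
       {ω | sfun t (fun i => ξ i ω) = m + 1 ∧ ξ t ω = false}) := by
    ext ω
    simp only [Set.mem_setOf_eq, Set.mem_union, sfun, Finset.sum_range_succ]
    rcases Bool.eq_false_or_eq_true (ξ t ω) with h | h <;> simp only [h, if_true, if_false,
      Bool.true_eq_false, Bool.false_eq_true, and_true, and_false, or_false, false_or] <;> omega
  have hd : Disjoint {ω | sfun t (fun i => ξ i ω) = m - 1 ∧ ξ t ω = true}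
      {ω | sfun t (fun i => ξ i ω) = m + 1 ∧ ξ t ω = false} := by
    refine Set.disjoint_left.mpr ?_
    rintro ω ⟨-, h1⟩ ⟨-, h2⟩
    rw [h1] at h2; exact Bool.noConfusion h2
  have hmeas2 : MeasurableSet {ω | sfun t (fun i => ξ i ω) = m + 1 ∧ ξ t ω = false} := by
    have : {ω | sfun t (fun i => ξ i ω) = m + 1 ∧ ξ t ω = false} =
        {ω | sfun t (fun i => ξ i ω) = m + 1} ∩ {ω | ξ t ω = false} := rfl
    rw [this]
    exact (meas_sfun ξ hξm t (m+1)).inter ((hξm t) (MeasurableSet.singleton false))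
  have h1 := ind μ n ξ K hξm hξi hξh hKm hKlt hKξ t (fun _ f => sfun t f = m - 1)
    (fun k f g h hf => by show sfun t g = m - 1; rw [← sfun_congr t f g h]; exact hf) true
  have h2 := ind μ n ξ K hξm hξi hξh hKm hKlt hKξ t (fun _ f => sfun t f = m + 1)
    (fun k f g h hf => by show sfun t g = m + 1; rw [← sfun_congr t f g h]; exact hf) false
  unfold bfun
  rw [hsplit, measure_union hd hmeas2, h1, h2]

include hξm hξi hξh hKm hKlt hKξ in
lemma ell_rec (t : ℕ) (m : ℤ) :
    ellfun μ n ξ (t+1) m = ellfun μ n ξ t (m - 1) / 2 + ellfun μ n ξ t (m + 1) / 2 := by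
  unfold ellfun
  have : ∀ j ∈ range n, bfun μ ξ (t+1) (m - j)
      = bfun μ ξ t ((m - 1) - j) / 2 + bfun μ ξ t ((m + 1) - j) / 2 := by
    intro j _
    rw [bfun_rec μ n ξ K hξm hξi hξh hKm hKlt hKξ t (m - j)]
    congr 2 <;> ring
  rw [Finset.sum_congr rfl this, Finset.sum_add_distrib]
  simp only [div_eq_mul_inv]
  rw [← Finset.sum_mul, ← Finset.sum_mul]
  ring

noncomputable def pfun (t : ℕ) (x : ℤ) : ℝ≥0∞ := μ {ω | (n : ℤ) - 1 - t - Z t ω = x}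

omit [IsProbabilityMeasure μ] in
include hZm in
lemma meas_pset (t : ℕ) (x : ℤ) : MeasurableSet {ω | (n : ℤ) - 1 - t - Z t ω = x} :=
  (measurable_const.sub (hZm t)) (measurableSet_singleton x)

omit [IsProbabilityMeasure μ] in
include hZrec in
lemma Xrec (t : ℕ) (ω : Ω) : (n : ℤ) - 1 - (t + 1 : ℕ) - Z (t + 1) ω =
    if ((n : ℤ) - 1 - t - Z t ω = 0 ∨ ξ t ω = true)
    then ((n : ℤ) - 1 - t - Z t ω) + 1 else ((n : ℤ) - 1 - t - Z t ω) - 1 := by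
  rw [Zstep n ξ Z hZrec t ω]
  have hiff : (Z t ω = (n : ℤ) - 1 - t ∨ ξ t ω = true)
      ↔ ((n : ℤ) - 1 - t - Z t ω = 0 ∨ ξ t ω = true) := or_congr (by omega) Iff.rfl
  rw [if_congr hiff rfl rfl]
  split_ifs with h
  · push_cast; ring
  · push_cast; ring

-- big independence bundle for pfun recursions
include hξm hξi hξh hKm hKlt hKξ hZm hZ0 hZrec in
lemma pX_half (t : ℕ) (y : ℤ) (b : Bool) :
    μ {ω | (n : ℤ) - 1 - t - Z t ω = y ∧ ξ t ω = b}
      = μ {ω | (n : ℤ) - 1 - t - Z t ω = y} / 2 := by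
  have h := ind μ n ξ K hξm hξi hξh hKm hKlt hKξ t
    (fun k f => (n : ℤ) - 1 - t - zf n t k f = y)
    (fun k f g h hf => by
      show (n : ℤ) - 1 - t - zf n t k g = y
      rw [← zf_congr n t k f g h]; exact hf) b
  have e1 : {ω | (n : ℤ) - 1 - t - Z t ω = y ∧ ξ t ω = b}
      = {ω | (n : ℤ) - 1 - t - zf n t (K ω) (fun i => ξ i ω) = y ∧ ξ t ω = b} := by
    ext ω; rw [Set.mem_setOf_eq, Set.mem_setOf_eq, hZeq n ξ K Z hZ0 hZrec t ω]
  have e2 : {ω | (n : ℤ) - 1 - t - Z t ω = y}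
      = {ω | (n : ℤ) - 1 - t - zf n t (K ω) (fun i => ξ i ω) = y} := by
    ext ω; rw [Set.mem_setOf_eq, Set.mem_setOf_eq, hZeq n ξ K Z hZ0 hZrec t ω]
  rw [e1, e2]
  exact h

include hξm hξi hξh hKm hKlt hKξ hZm hZ0 hZrec in
lemma pfun_rec_big (t : ℕ) (x : ℤ) (hx : 2 ≤ x) :
    pfun μ n Z (t+1) x = pfun μ n Z t (x-1) / 2 + pfun μ n Z t (x+1) / 2 := by
  have hsplit : {ω | (n : ℤ) - 1 - (t+1 : ℕ) - Z (t+1) ω = x} =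
      ({ω | (n : ℤ) - 1 - t - Z t ω = x - 1 ∧ ξ t ω = true} ∪
       {ω | (n : ℤ) - 1 - t - Z t ω = x + 1 ∧ ξ t ω = false}) := by
    ext ω
    simp only [Set.mem_setOf_eq, Set.mem_union, Xrec n ξ Z hZrec t ω]
    rcases Bool.eq_false_or_eq_true (ξ t ω) with h | h
    · simp only [h]
      simp only [or_true, if_true, and_true, Bool.true_eq_false, and_false, or_false]
      omega
    · simp only [h]
      simp only [Bool.false_eq_true, or_false, and_false, and_true, false_or]
      by_cases h0 : (n : ℤ) - 1 - t - Z t ω = 0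
      · rw [if_pos h0]; omega
      · rw [if_neg h0]; omega
  have hd : Disjoint {ω | (n : ℤ) - 1 - t - Z t ω = x - 1 ∧ ξ t ω = true}
      {ω | (n : ℤ) - 1 - t - Z t ω = x + 1 ∧ ξ t ω = false} := by
    refine Set.disjoint_left.mpr ?_
    rintro ω ⟨-, h1⟩ ⟨-, h2⟩
    rw [h1] at h2; exact Bool.noConfusion h2
  have hm2 : MeasurableSet {ω | (n : ℤ) - 1 - t - Z t ω = x + 1 ∧ ξ t ω = false} := by
    have : {ω | (n : ℤ) - 1 - t - Z t ω = x + 1 ∧ ξ t ω = false} =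
        {ω | (n : ℤ) - 1 - t - Z t ω = x + 1} ∩ {ω | ξ t ω = false} := rfl
    rw [this]
    exact (meas_pset n Z hZm t (x+1)).inter ((hξm t) (MeasurableSet.singleton false))
  unfold pfun
  rw [hsplit, measure_union hd hm2,
    pX_half μ n ξ K hξm hξi hξh hKm hKlt hKξ Z hZm hZ0 hZrec t (x-1) true,
    pX_half μ n ξ K hξm hξi hξh hKm hKlt hKξ Z hZm hZ0 hZrec t (x+1) false]

include hξm hξi hξh hKm hKlt hKξ hZm hZ0 hZrec in
lemma pfun_rec_one (t : ℕ) :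
    pfun μ n Z (t+1) 1 = pfun μ n Z t 0 + pfun μ n Z t 2 / 2 := by
  have hsplit : {ω | (n : ℤ) - 1 - (t+1 : ℕ) - Z (t+1) ω = 1} =
      ({ω | (n : ℤ) - 1 - t - Z t ω = 0} ∪
       {ω | (n : ℤ) - 1 - t - Z t ω = 2 ∧ ξ t ω = false}) := by
    ext ω
    simp only [Set.mem_setOf_eq, Set.mem_union, Xrec n ξ Z hZrec t ω]
    rcases Bool.eq_false_or_eq_true (ξ t ω) with h | h
    · simp only [h]
      simp only [or_true, if_true, Bool.true_eq_false, and_false, or_false]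
      omega
    · simp only [h]
      simp only [Bool.false_eq_true, or_false, and_true]
      by_cases h0 : (n : ℤ) - 1 - t - Z t ω = 0
      · rw [if_pos h0]; omega
      · rw [if_neg h0]; omega
  have hd : Disjoint {ω | (n : ℤ) - 1 - t - Z t ω = 0}
      {ω | (n : ℤ) - 1 - t - Z t ω = 2 ∧ ξ t ω = false} := by
    refine Set.disjoint_left.mpr ?_
    rintro ω h1 ⟨h2, -⟩
    rw [Set.mem_setOf_eq] at h1
    omega
  have hm2 : MeasurableSet {ω | (n : ℤ) - 1 - t - Z t ω = 2 ∧ ξ t ω = false} := by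
    have : {ω | (n : ℤ) - 1 - t - Z t ω = 2 ∧ ξ t ω = false} =
        {ω | (n : ℤ) - 1 - t - Z t ω = 2} ∩ {ω | ξ t ω = false} := rfl
    rw [this]
    exact (meas_pset n Z hZm t 2).inter ((hξm t) (MeasurableSet.singleton false))
  unfold pfun
  rw [hsplit, measure_union hd hm2,
    pX_half μ n ξ K hξm hξi hξh hKm hKlt hKξ Z hZm hZ0 hZrec t 2 false]

include hξm hξi hξh hKm hKlt hKξ hZm hZ0 hZrec in
lemma pfun_rec_zero (t : ℕ) :
    pfun μ n Z (t+1) 0 = pfun μ n Z t 1 / 2 := by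
  have hXpos : ∀ ω, 0 ≤ (n : ℤ) - 1 - t - Z t ω := by
    intro ω
    have := hZle n ξ K hKlt Z hZ0 hZrec t ω
    omega
  have hsplit : {ω | (n : ℤ) - 1 - (t+1 : ℕ) - Z (t+1) ω = 0} =
      {ω | (n : ℤ) - 1 - t - Z t ω = 1 ∧ ξ t ω = false} := by
    ext ω
    have hX := hXpos ω
    simp only [Set.mem_setOf_eq, Xrec n ξ Z hZrec t ω]
    rcases Bool.eq_false_or_eq_true (ξ t ω) with h | h
    · simp only [h]
      simp only [or_true, if_true, Bool.true_eq_false, and_false, iff_false]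
      omega
    · simp only [h]
      simp only [and_true]
      by_cases h0 : (n : ℤ) - 1 - t - Z t ω = 0
      · rw [if_pos (Or.inl h0)]; omega
      · rw [if_neg (by simp [h0])]; omega
  unfold pfun
  rw [hsplit, pX_half μ n ξ K hξm hξi hξh hKm hKlt hKξ Z hZm hZ0 hZrec t 1 false]

omit [IsProbabilityMeasure μ] in
lemma bfun_zero (m : ℤ) : bfun μ ξ 0 m = if m = 0 then μ Set.univ else 0 := by
  unfold bfun sfun
  by_cases h : m = 0
  · rw [if_pos h, h]
    congr 1
    ext ω; simp
  · rw [if_neg h]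
    have : {ω : Ω | (∑ s ∈ range 0, if ξ s ω then (1:ℤ) else -1) = m} = ∅ := by
      ext ω; simp; omega
    rw [this, measure_empty]

lemma sum_delta (m : ℤ) :
    (∑ j ∈ range n, (if m - (j : ℤ) = 0 then (1 : ℝ≥0∞) else 0))
      = if 0 ≤ m ∧ m < n then 1 else 0 := by
  by_cases h : 0 ≤ m ∧ m < n
  · rw [if_pos h]
    rw [Finset.sum_eq_single m.toNat]
    · rw [if_pos (by omega)]
    · intro j _ hj
      rw [if_neg (by omega)]
    · intro hmem
      exfalso
      exact hmem (mem_range.mpr (by omega))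
  · rw [if_neg h]
    apply Finset.sum_eq_zero
    intro j hj
    have := mem_range.mp hj
    rw [if_neg (by omega)]

include hKlt hKu hZ0 in
lemma pfun_base (x : ℤ) :
    pfun μ n Z 0 x = if 0 ≤ x ∧ x < n then (n : ℝ≥0∞)⁻¹ else 0 := by
  unfold pfun
  have hset : {ω | (n : ℤ) - 1 - (0:ℕ) - Z 0 ω = x} = {ω | (n : ℤ) - 1 - (K ω) = x} := by
    ext ω; rw [Set.mem_setOf_eq, Set.mem_setOf_eq, hZ0 ω]; push_cast; constructor <;> omega
  rw [hset]
  by_cases h : 0 ≤ x ∧ x < n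
  · rw [if_pos h]
    have hj : {ω | (n : ℤ) - 1 - (K ω) = x} = {ω | K ω = ((n : ℤ) - 1 - x).toNat} := by
      ext ω
      have := hKlt ω
      rw [Set.mem_setOf_eq, Set.mem_setOf_eq]
      omega
    rw [hj]
    exact hKu _ (by omega)
  · rw [if_neg h]
    have : {ω | (n : ℤ) - 1 - (K ω) = x} = ∅ := by
      ext ω
      have := hKlt ω
      simp only [Set.mem_setOf_eq, Set.mem_empty_iff_false, iff_false]
      omega
    rw [this, measure_empty]

include hKu in
lemma ellfun_base (m : ℤ) :
    ellfun μ n ξ 0 m = (if 0 ≤ m ∧ m < n then 1 else 0) * (n : ℝ≥0∞)⁻¹ := by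
  unfold ellfun
  congr 1
  rw [← sum_delta n m]
  refine Finset.sum_congr rfl ?_
  intro j _
  rw [bfun_zero μ ξ (m - j), measure_univ]

include hξm hξi hξh hKm hKlt hKu hKξ hZm hZ0 hZrec in
lemma fold (hn : 1 ≤ n) : ∀ t : ℕ, pfun μ n Z t 0 = ellfun μ n ξ t 0 ∧
    ∀ x : ℤ, 0 < x → pfun μ n Z t x = ellfun μ n ξ t x + ellfun μ n ξ t (-x) := by
  intro t
  induction t with
  | zero =>
      constructor
      · rw [pfun_base μ n K hKlt hKu Z hZ0 0, ellfun_base μ n ξ K hKu 0,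
          if_pos ⟨le_refl 0, by exact_mod_cast hn⟩, if_pos ⟨le_refl 0, by exact_mod_cast hn⟩,
          one_mul]
      · intro x hx
        rw [pfun_base μ n K hKlt hKu Z hZ0 x, ellfun_base μ n ξ K hKu x,
          ellfun_base μ n ξ K hKu (-x)]
        have hneg : (if 0 ≤ -x ∧ -x < ((n:ℕ):ℤ) then (1:ℝ≥0∞) else 0) = 0 := if_neg (by omega)
        rw [hneg, zero_mul, add_zero]
        by_cases h : 0 ≤ x ∧ x < ((n:ℕ):ℤ)
        · rw [if_pos h, if_pos h, one_mul]
        · rw [if_neg h, if_neg h, zero_mul]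
  | succ t ih =>
      have e2 : ∀ (m : ℤ), ellfun μ n ξ (t+1) m
          = ellfun μ n ξ t (m - 1) / 2 + ellfun μ n ξ t (m + 1) / 2 :=
        ell_rec μ n ξ K hξm hξi hξh hKm hKlt hKξ t
      constructor
      · rw [pfun_rec_zero μ n ξ K hξm hξi hξh hKm hKlt hKξ Z hZm hZ0 hZrec t,
          (ih.2 1 one_pos), e2 0]
        norm_num [ENNReal.add_div]
        exact add_comm _ _
      · intro x hx
        rcases eq_or_lt_of_le (show (1:ℤ) ≤ x by omega) with h1 | h2
        · -- x = 1
          have hx1 : x = 1 := by omega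
          subst hx1
          rw [pfun_rec_one μ n ξ K hξm hξi hξh hKm hKlt hKξ Z hZm hZ0 hZrec t,
            ih.1, (ih.2 2 (by norm_num)), e2 1, e2 (-1)]
          norm_num
          rw [ENNReal.add_div]
          calc ellfun μ n ξ t 0 + (ellfun μ n ξ t 2 / 2 + ellfun μ n ξ t (-2) / 2)
              = (ellfun μ n ξ t 0 / 2 + ellfun μ n ξ t 0 / 2)
                + (ellfun μ n ξ t 2 / 2 + ellfun μ n ξ t (-2) / 2) := by
                rw [ENNReal.add_halves]
            _ = ellfun μ n ξ t 0 / 2 + ellfun μ n ξ t 2 / 2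
                + (ellfun μ n ξ t (-2) / 2 + ellfun μ n ξ t 0 / 2) := by abel
        · -- 2 ≤ x
          rw [pfun_rec_big μ n ξ K hξm hξi hξh hKm hKlt hKξ Z hZm hZ0 hZrec t x (by omega),
            ih.2 (x - 1) (by omega), ih.2 (x + 1) (by omega), e2 x, e2 (-x),
            show -(x - 1) = -x + 1 by ring, show -(x + 1) = -x - 1 by ring,
            ENNReal.add_div, ENNReal.add_div]
          abel

include hξm hξi hξh hKm hKlt hKu hKξ hZm hZ0 hZrec in
lemma wall_le (hn : 1 ≤ n) (t : ℕ) :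
    μ {ω | Z t ω = (n : ℤ) - 1 - t} ≤ (n : ℝ≥0∞)⁻¹ := by
  have hset : {ω | Z t ω = (n : ℤ) - 1 - t} = {ω | (n : ℤ) - 1 - t - Z t ω = 0} := by
    ext ω; simp only [Set.mem_setOf_eq]; omega
  rw [hset]
  have h0 := (fold μ n ξ K hξm hξi hξh hKm hKlt hKu hKξ Z hZm hZ0 hZrec hn t).1
  show pfun μ n Z t 0 ≤ _
  rw [h0]
  unfold ellfun
  have hsum : (∑ j ∈ range n, bfun μ ξ t ((0:ℤ) - j)) ≤ 1 := by
    unfold bfun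
    rw [← measure_biUnion_finset ?hd ?hm]
    case hd =>
      intro a _ c _ hac
      refine Set.disjoint_left.mpr ?_
      intro ω h1 h2
      simp only [Set.mem_setOf_eq] at h1 h2
      rw [h1] at h2
      exact hac (by omega)
    case hm =>
      intro j _
      exact meas_sfun ξ hξm t ((0:ℤ) - j)
    exact prob_le_one
  calc (∑ j ∈ range n, bfun μ ξ t ((0:ℤ) - j)) * (n : ℝ≥0∞)⁻¹
      ≤ 1 * (n : ℝ≥0∞)⁻¹ := mul_le_mul_left hsum _
    _ = (n : ℝ≥0∞)⁻¹ := one_mul _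

omit [IsProbabilityMeasure μ] in
include hZm in
lemma measB (t : ℕ) : MeasurableSet {ω | ∀ s ≤ t, 0 < Z s ω} := by
  have hset : {ω | ∀ s ≤ t, 0 < Z s ω} = ⋂ s ∈ Set.Iic t, {ω | 0 < Z s ω} := by
    ext ω; simp [Set.mem_iInter]
  rw [hset]
  exact MeasurableSet.biInter (Set.to_countable _)
    (fun s _ => measurableSet_lt measurable_const (hZm s))

include hξm hξi hξh hKm hKlt hKu hKξ hZm hZ0 hZrec in
lemma main_bound (hn : 2 ≤ n) :
    (((n - 1 : ℕ) : ℝ≥0∞)) ≤ 2 * (∑' t : ℕ, μ {ω | ∀ s ≤ t, 0 < Z s ω}) + 4 ∧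
    2 * (∑' t : ℕ, μ {ω | ∀ s ≤ t, 0 < Z s ω}) ≤ ((n - 1 : ℕ) : ℝ≥0∞) + 2 := by
  classical
  have hn1 : 1 ≤ n := by omega
  have hnne : (n : ℝ≥0∞) ≠ 0 := Nat.cast_ne_zero.mpr (by omega)
  have hntop : (n : ℝ≥0∞) ≠ ⊤ := ENNReal.natCast_ne_top n
  set B : ℕ → Set Ω := fun t => {ω | ∀ s ≤ t, 0 < Z s ω} with hB
  set D : ℕ → Set Ω := fun t =>
    {ω | (∀ s ≤ t, 0 < Z s ω) ∧ (Z t ω = (n : ℤ) - 1 - t ∨ ξ t ω = true)} with hD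
  -- tsum is a finite sum
  have htsum : ∑' t : ℕ, μ (B t) = ∑ t ∈ range (n - 1), μ (B t) := by
    refine tsum_eq_sum ?_
    intro t ht
    have hle : n - 1 ≤ t := by
      by_contra hc; exact ht (mem_range.mpr (by omega))
    have hempty : B t = ∅ := by
      ext ω
      simp only [hB, Set.mem_setOf_eq, Set.mem_empty_iff_false, iff_false, not_forall]
      exact ⟨n - 1, hle, by have := Zfinal n ξ K hKlt Z hZ0 hZrec hn1 ω; omega⟩
    rw [hempty, measure_empty]
  set ET := ∑ t ∈ range (n - 1), μ (B t) with hET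
  -- measurability
  have hmeasB : ∀ t, MeasurableSet (B t) := fun t => measB Z hZm t
  have hmeasWall : ∀ t, MeasurableSet {ω | Z t ω = (n : ℤ) - 1 - t} :=
    fun t => (hZm t) (measurableSet_singleton _)
  have hmeasXi : ∀ (t : ℕ) (b : Bool), MeasurableSet {ω | ξ t ω = b} :=
    fun t b => (hξm t) (MeasurableSet.singleton b)
  have hmeasD : ∀ t, MeasurableSet (D t) := by
    intro t
    have : D t = B t ∩ ({ω | Z t ω = (n : ℤ) - 1 - t} ∪ {ω | ξ t ω = true}) := rfl
    rw [this]
    exact (hmeasB t).inter ((hmeasWall t).union (hmeasXi t true))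
  -- half lemma for B
  have hBhalf : ∀ t, μ {ω | (∀ s ≤ t, 0 < Z s ω) ∧ ξ t ω = true} = μ (B t) / 2 := by
    intro t
    have h := ind μ n ξ K hξm hξi hξh hKm hKlt hKξ t
      (fun k f => ∀ s ≤ t, 0 < zf n s k f)
      (fun k f g hfg hf s hs => by
        rw [← zf_congr n s k f g (fun i hi => hfg i (lt_of_lt_of_le hi hs))]
        exact hf s hs) true
    have e1 : {ω | (∀ s ≤ t, 0 < Z s ω) ∧ ξ t ω = true}
        = {ω | (∀ s ≤ t, 0 < zf n s (K ω) (fun i => ξ i ω)) ∧ ξ t ω = true} := by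
      ext ω; simp only [Set.mem_setOf_eq, hZeq n ξ K Z hZ0 hZrec]
    have e2 : B t = {ω | ∀ s ≤ t, 0 < zf n s (K ω) (fun i => ξ i ω)} := by
      ext ω; simp only [hB, Set.mem_setOf_eq, hZeq n ξ K Z hZ0 hZrec]
    rw [e1, e2]
    exact h
  -- decomposition of D
  have hDsplit : ∀ t, μ (D t) = μ (B t) / 2 +
      μ ({ω | ((∀ s ≤ t, 0 < Z s ω) ∧ Z t ω = (n : ℤ) - 1 - t) ∧ ξ t ω = false}) := by
    intro t
    have hset : D t = {ω | (∀ s ≤ t, 0 < Z s ω) ∧ ξ t ω = true} ∪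
        {ω | ((∀ s ≤ t, 0 < Z s ω) ∧ Z t ω = (n : ℤ) - 1 - t) ∧ ξ t ω = false} := by
      ext ω
      simp only [hD, Set.mem_setOf_eq, Set.mem_union]
      rcases Bool.eq_false_or_eq_true (ξ t ω) with h | h <;> simp [h]
    have hd : Disjoint {ω | (∀ s ≤ t, 0 < Z s ω) ∧ ξ t ω = true}
        {ω | ((∀ s ≤ t, 0 < Z s ω) ∧ Z t ω = (n : ℤ) - 1 - t) ∧ ξ t ω = false} := by
      refine Set.disjoint_left.mpr ?_
      rintro ω ⟨-, h1⟩ ⟨-, h2⟩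
      rw [h1] at h2; exact Bool.noConfusion h2
    have hm2 : MeasurableSet
        {ω | ((∀ s ≤ t, 0 < Z s ω) ∧ Z t ω = (n : ℤ) - 1 - t) ∧ ξ t ω = false} := by
      have : {ω | ((∀ s ≤ t, 0 < Z s ω) ∧ Z t ω = (n : ℤ) - 1 - t) ∧ ξ t ω = false}
          = (B t ∩ {ω | Z t ω = (n : ℤ) - 1 - t}) ∩ {ω | ξ t ω = false} := rfl
      rw [this]
      exact ((hmeasB t).inter (hmeasWall t)).inter (hmeasXi t false)
    rw [hset, measure_union hd hm2, hBhalf t]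
  -- bounds on μ (D t)
  have hDup : ∀ t, μ (D t) ≤ μ (B t) / 2 + (n : ℝ≥0∞)⁻¹ := by
    intro t
    rw [hDsplit t]
    refine add_le_add le_rfl ?_
    refine le_trans (measure_mono ?_) (wall_le μ n ξ K hξm hξi hξh hKm hKlt hKu hKξ
      Z hZm hZ0 hZrec hn1 t)
    rintro ω ⟨⟨-, h2⟩, -⟩
    exact h2
  have hDlo : ∀ t, μ (B t) / 2 ≤ μ (D t) := by
    intro t
    rw [hDsplit t]
    exact le_self_add
  -- the integrand identity
  set g : ℕ → Ω → ℝ≥0∞ := fun t ω =>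
    if ((∀ s ≤ t, 0 < Z s ω) ∧ (Z t ω = (n : ℤ) - 1 - t ∨ ξ t ω = true)) then 1 else 0 with hg
  have hgmeas : ∀ t, Measurable (g t) := by
    intro t
    exact Measurable.ite (hmeasD t) measurable_const measurable_const
  have hgint : ∀ t, ∫⁻ ω, g t ω ∂μ = μ (D t) := by
    intro t
    have : g t = Set.indicator (D t) (fun _ => 1) := by
      funext ω
      simp only [hg, Set.indicator_apply, hD, Set.mem_setOf_eq]
    rw [this]
    exact lintegral_indicator_const (hmeasD t) 1 |>.trans (one_mul _)
  have hNf_eq : ∀ ω, ((Nf n ξ Z ω : ℝ≥0∞)) = ∑ t ∈ range (n - 1), g t ω := by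
    intro ω
    unfold Nf
    push_cast [apply_ite]
    rfl
  have hNfmeas : Measurable (fun ω => ((Nf n ξ Z ω : ℝ≥0∞))) := by
    have : (fun ω => ((Nf n ξ Z ω : ℝ≥0∞))) = fun ω => ∑ t ∈ range (n - 1), g t ω := by
      funext ω; exact hNf_eq ω
    rw [this]
    exact Finset.measurable_sum _ (fun t _ => hgmeas t)
  set EN := ∫⁻ ω, ((Nf n ξ Z ω : ℝ≥0∞)) ∂μ with hEN
  have hENsum : EN = ∑ t ∈ range (n - 1), μ (D t) := by
    rw [hEN, lintegral_congr hNf_eq, lintegral_finset_sum _ (fun t _ => hgmeas t)]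
    exact Finset.sum_congr rfl (fun t _ => hgint t)
  -- K integral
  have hKcast : Measurable (fun ω => ((K ω : ℝ≥0∞))) := measurable_from_top.comp hKm
  set IK := ∫⁻ ω, ((K ω : ℝ≥0∞)) ∂μ with hIK
  have hIKval : 2 * IK = ((n - 1 : ℕ) : ℝ≥0∞) := by
    have hpt : ∀ ω, ((K ω : ℝ≥0∞)) = ∑ j ∈ range n,
        Set.indicator {ω' | K ω' = j} (fun _ => (j : ℝ≥0∞)) ω := by
      intro ω
      rw [Finset.sum_eq_single (K ω)]
      · simp [Set.indicator_apply]
      · intro j _ hj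
        simp [Set.indicator_apply, fun h : K ω = j => hj h.symm]
        intro h; exact absurd h.symm hj
      · intro hmem; exact absurd (mem_range.mpr (hKlt ω)) hmem
    have : IK = ∑ j ∈ range n, (j : ℝ≥0∞) * μ {ω | K ω = j} := by
      rw [hIK, lintegral_congr hpt, lintegral_finset_sum _
        (fun j _ => (measurable_const.indicator
          (show MeasurableSet {ω' | K ω' = j} from hKm (MeasurableSet.singleton j))))]
      exact Finset.sum_congr rfl
        (fun j _ => lintegral_indicator_const
          (show MeasurableSet {ω' | K ω' = j} from hKm (MeasurableSet.singleton j)) _)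
    rw [this]
    have hval : ∀ j ∈ range n, (j : ℝ≥0∞) * μ {ω | K ω = j} = (j : ℝ≥0∞) * (n : ℝ≥0∞)⁻¹ :=
      fun j hj => by rw [hKu j (mem_range.mp hj)]
    rw [Finset.sum_congr rfl hval, ← Finset.sum_mul]
    have hcast : (∑ j ∈ range n, (j : ℝ≥0∞)) = ((∑ j ∈ range n, j : ℕ) : ℝ≥0∞) := by
      push_cast; rfl
    rw [hcast]
    have hS2 : ((∑ j ∈ range n, j : ℕ) : ℝ≥0∞) * 2
        = (n : ℝ≥0∞) * ((n - 1 : ℕ) : ℝ≥0∞) := by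
      have hnat := Finset.sum_range_id_mul_two n
      have h' : ((((∑ j ∈ range n, j) * 2 : ℕ)) : ℝ≥0∞) = ((n * (n - 1) : ℕ) : ℝ≥0∞) := by
        rw [hnat]
      simpa [Nat.cast_mul, Nat.cast_ofNat] using h'
    calc 2 * (((∑ j ∈ range n, j : ℕ) : ℝ≥0∞) * (n : ℝ≥0∞)⁻¹)
        = (((∑ j ∈ range n, j : ℕ) : ℝ≥0∞) * 2) * (n : ℝ≥0∞)⁻¹ := by ring
      _ = ((n : ℝ≥0∞) * ((n - 1 : ℕ) : ℝ≥0∞)) * (n : ℝ≥0∞)⁻¹ := by rw [hS2]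
      _ = ((n - 1 : ℕ) : ℝ≥0∞) * ((n : ℝ≥0∞) * (n : ℝ≥0∞)⁻¹) := by ring
      _ = ((n - 1 : ℕ) : ℝ≥0∞) := by rw [ENNReal.mul_inv_cancel hnne hntop, mul_one]
  -- pointwise inequalities integrated
  have hlow1 : ∀ ω, ((K ω : ℝ≥0∞)) ≤ 2 * ((Nf n ξ Z ω : ℝ≥0∞)) := by
    intro ω
    have h := (pathwise n ξ K hKlt Z hZ0 hZrec hn1 ω).1
    have h2 := (Nat.cast_le (α := ℝ≥0∞)).mpr h
    push_cast at h2
    exact h2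
  have hup1 : ∀ ω, 2 * ((Nf n ξ Z ω : ℝ≥0∞)) ≤ ((K ω : ℝ≥0∞)) + 1 := by
    intro ω
    have h := (pathwise n ξ K hKlt Z hZ0 hZrec hn1 ω).2
    have h2 := (Nat.cast_le (α := ℝ≥0∞)).mpr h
    push_cast at h2
    exact h2
  have hIK_le : IK ≤ 2 * EN := by
    rw [hIK, hEN, ← lintegral_const_mul 2 hNfmeas]
    exact lintegral_mono hlow1
  have hEN_le : 2 * EN ≤ IK + 1 := by
    rw [hEN, ← lintegral_const_mul 2 hNfmeas]
    calc ∫⁻ ω, 2 * ((Nf n ξ Z ω : ℝ≥0∞)) ∂μ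
        ≤ ∫⁻ ω, (((K ω : ℝ≥0∞)) + 1) ∂μ := lintegral_mono hup1
      _ = IK + 1 := by
          rw [lintegral_add_right _ measurable_const, lintegral_one, measure_univ]
  -- relating EN and ET
  have hhalf_sum : (∑ t ∈ range (n - 1), μ (B t) / 2) * 2 = ET := by
    rw [Finset.sum_mul, hET]
    exact Finset.sum_congr rfl (fun t _ =>
      ENNReal.div_mul_cancel (by norm_num) (by norm_num))
  have hET_le : ET ≤ 2 * EN := by
    have h := mul_le_mul_left (Finset.sum_le_sum (s := range (n - 1)) (fun t _ => hDlo t)) (2 : ℝ≥0∞)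
    rw [hhalf_sum] at h
    rw [hENsum, mul_comm]
    exact h
  have h2EN_le : 2 * EN ≤ ET + 2 := by
    rw [hENsum]
    calc 2 * (∑ t ∈ range (n - 1), μ (D t))
        ≤ 2 * (∑ t ∈ range (n - 1), (μ (B t) / 2 + (n : ℝ≥0∞)⁻¹)) :=
          mul_le_mul_right (Finset.sum_le_sum (fun t _ => hDup t)) 2
      _ = 2 * (∑ t ∈ range (n - 1), μ (B t) / 2)
            + 2 * (((n - 1 : ℕ) : ℝ≥0∞) * (n : ℝ≥0∞)⁻¹) := by
          rw [Finset.sum_add_distrib, Finset.sum_const, Finset.card_range, nsmul_eq_mul,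
            mul_add]
      _ ≤ ET + 2 * 1 := by
          refine add_le_add ?_ ?_
          · rw [← hhalf_sum]; ring_nf; exact le_refl _
          · refine mul_le_mul_right ?_ 2
            calc ((n - 1 : ℕ) : ℝ≥0∞) * (n : ℝ≥0∞)⁻¹
                ≤ (n : ℝ≥0∞) * (n : ℝ≥0∞)⁻¹ :=
                  mul_le_mul_left (Nat.cast_le.mpr (by omega)) _
              _ = 1 := ENNReal.mul_inv_cancel hnne hntop
      _ = ET + 2 := by rw [mul_one]
  rw [htsum]
  constructor
  · calc ((n - 1 : ℕ) : ℝ≥0∞) = 2 * IK := hIKval.symm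
      _ ≤ 2 * (2 * EN) := mul_le_mul_right hIK_le 2
      _ ≤ 2 * (ET + 2) := mul_le_mul_right h2EN_le 2
      _ = 2 * ET + 4 := by ring
  · calc 2 * ET ≤ 2 * (2 * EN) := mul_le_mul_right hET_le 2
      _ ≤ 2 * (IK + 1) := mul_le_mul_right hEN_le 2
      _ = 2 * IK + 2 := by ring
      _ = ((n - 1 : ℕ) : ℝ≥0∞) + 2 := by rw [hIKval]

include hξm hξi hξh hKm hKlt hKu hKξ hZm hZ0 hZrec in
lemma main_real (hn : 2 ≤ n) :
    (∑' t : ℕ, μ {ω | ∀ s ≤ t, 0 < Z s ω}) ≠ ⊤ ∧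
    ((n : ℝ) - 5) / 2 ≤ (∑' t : ℕ, μ {ω | ∀ s ≤ t, 0 < Z s ω}).toReal ∧
    (∑' t : ℕ, μ {ω | ∀ s ≤ t, 0 < Z s ω}).toReal ≤ ((n : ℝ) + 1) / 2 := by
  obtain ⟨hlo, hup⟩ := main_bound μ n ξ K hξm hξi hξh hKm hKlt hKu hKξ Z hZm hZ0 hZrec hn
  set T := ∑' t : ℕ, μ {ω | ∀ s ≤ t, 0 < Z s ω} with hT
  have hrhs_ne : ((n - 1 : ℕ) : ℝ≥0∞) + 2 ≠ ⊤ :=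
    ENNReal.add_ne_top.mpr ⟨ENNReal.natCast_ne_top _, by norm_num⟩
  have hTne : T ≠ ⊤ := by
    intro h
    rw [h] at hup
    have h2 : (2 : ℝ≥0∞) * ⊤ = ⊤ := by simp
    rw [h2, top_le_iff] at hup
    exact hrhs_ne hup
  have h2T_ne : 2 * T ≠ ⊤ := ENNReal.mul_ne_top (by norm_num) hTne
  have hupR : 2 * T.toReal ≤ ((n - 1 : ℕ) : ℝ) + 2 := by
    have h := ENNReal.toReal_mono hrhs_ne hup
    rw [ENNReal.toReal_mul, ENNReal.toReal_add (ENNReal.natCast_ne_top _) (by norm_num),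
      ENNReal.toReal_natCast] at h
    simpa using h
  have hloR : ((n - 1 : ℕ) : ℝ) ≤ 2 * T.toReal + 4 := by
    have h := ENNReal.toReal_mono
      (ENNReal.add_ne_top.mpr ⟨h2T_ne, by norm_num⟩) hlo
    rw [ENNReal.toReal_add h2T_ne (by norm_num), ENNReal.toReal_mul,
      ENNReal.toReal_natCast] at h
    simpa using h
  have hc : ((n - 1 : ℕ) : ℝ) = (n : ℝ) - 1 := by
    have : (1 : ℕ) ≤ n := by omega
    push_cast [this]
    ring
  rw [hc] at hupR hloR
  exact ⟨hTne, by linarith, by linarith⟩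

end Ind

/-- for the cop sweeping the path `P_n` from vertex `0` against a drunk robber
started uniformly at random (setup as in Statement 9, with the distance process `Z`),
there is a constant `C` such that for all `n ≥ 2` the expected capture time satisfies
`𝔼 T_n ≥ (n/2)(1 - C log n / n)`; consequently, for any family of such models,
`𝔼 T_n = (1+o(1)) n/2`. -/
theorem path_sweep_uniform_start_lower :
    ∃ C > 0, (∀ n : ℕ, 2 ≤ n →
      ∀ (Ω : Type) (mΩ : MeasurableSpace Ω) (μ : Measure Ω),
        IsProbabilityMeasure μ →
      ∀ (ξ : ℕ → Ω → Bool), (∀ i, Measurable (ξ i)) →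
        iIndepFun ξ μ →
        (∀ i, μ {ω | ξ i ω = true} = 1 / 2) →
      ∀ (K : Ω → ℕ), Measurable K → (∀ ω, K ω < n) →
        (∀ j < n, μ {ω | K ω = j} = (n : ℝ≥0∞)⁻¹) →
        IndepFun K (fun ω => fun i => ξ i ω) μ →
      ∀ (Z : ℕ → Ω → ℤ), (∀ t, Measurable (Z t)) →
        (∀ ω, Z 0 ω = (K ω : ℤ)) →
        (∀ t ω, Z (t + 1) ω =
          if Z t ω = (n : ℤ) - 1 - t then Z t ω - 2
          else if ξ t ω then Z t ω - 2 else Z t ω) →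
      ENNReal.ofReal (((n : ℝ) / 2) * (1 - C * Real.log n / n))
        ≤ ∑' t : ℕ, μ {ω | ∀ s ≤ t, 0 < Z s ω}) ∧
    (∀ (Ω : ℕ → Type) (mΩ : ∀ n, MeasurableSpace (Ω n)) (μ : ∀ n, Measure (Ω n)),
      (∀ n, IsProbabilityMeasure (μ n)) →
      ∀ (ξ : ∀ n, ℕ → Ω n → Bool), (∀ n i, Measurable (ξ n i)) →
        (∀ n, iIndepFun (ξ n) (μ n)) →
        (∀ n i, μ n {ω | ξ n i ω = true} = 1 / 2) →
      ∀ (K : ∀ n, Ω n → ℕ), (∀ n, Measurable (K n)) → (∀ n, 1 ≤ n → ∀ ω, K n ω < n) →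
        (∀ n, 1 ≤ n → ∀ j < n, μ n {ω | K n ω = j} = (n : ℝ≥0∞)⁻¹) →
        (∀ n, IndepFun (K n) (fun ω => fun i => ξ n i ω) (μ n)) →
      ∀ (Z : ∀ n, ℕ → Ω n → ℤ), (∀ n t, Measurable (Z n t)) →
        (∀ n ω, Z n 0 ω = (K n ω : ℤ)) →
        (∀ n t ω, Z n (t + 1) ω =
          if Z n t ω = (n : ℤ) - 1 - t then Z n t ω - 2
          else if ξ n t ω then Z n t ω - 2 else Z n t ω) →
      Tendsto
        (fun n => (∑' t : ℕ, μ n {ω | ∀ s ≤ t, 0 < Z n s ω}).toReal / ((n : ℝ) / 2))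
        atTop (nhds 1)) := by
  refine ⟨8, by norm_num, ?_, ?_⟩
  · intro n hn Ω mΩ μ hprob ξ hξm hξi hξh K hKm hKlt hKu hKξ Z hZm hZ0 hZrec
    haveI := hprob
    obtain ⟨hTne, hlo, hup⟩ := main_real μ n ξ K hξm hξi hξh hKm hKlt hKu hKξ Z hZm hZ0 hZrec hn
    set T := ∑' t : ℕ, μ {ω | ∀ s ≤ t, 0 < Z s ω} with hT
    have hn2 : (2 : ℝ) ≤ (n : ℝ) := by exact_mod_cast hn
    have hnpos : (0 : ℝ) < n := by linarith
    have hlog2 : (0.6931471803 : ℝ) < Real.log 2 := Real.log_two_gt_d9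
    have hlogn : Real.log 2 ≤ Real.log n := Real.log_le_log (by norm_num) hn2
    have hid : ((n : ℝ) / 2) * (1 - 8 * Real.log n / n) = (n : ℝ) / 2 - 4 * Real.log n := by
      field_simp
      ring
    have hkey : ((n : ℝ) / 2) * (1 - 8 * Real.log n / n) ≤ T.toReal := by
      rw [hid]
      have : (4 : ℝ) * Real.log n ≥ 5 / 2 := by nlinarith
      linarith
    calc ENNReal.ofReal (((n : ℝ) / 2) * (1 - 8 * Real.log n / n))
        ≤ ENNReal.ofReal T.toReal := ENNReal.ofReal_le_ofReal hkey
      _ = T := ENNReal.ofReal_toReal hTne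
  · intro Ω mΩ μ hprob ξ hξm hξi hξh K hKm hKlt hKu hKξ Z hZm hZ0 hZrec
    have hbnd : ∀ n : ℕ, 2 ≤ n →
        ((n : ℝ) - 5) / 2 ≤ (∑' t : ℕ, μ n {ω | ∀ s ≤ t, 0 < Z n s ω}).toReal ∧
        (∑' t : ℕ, μ n {ω | ∀ s ≤ t, 0 < Z n s ω}).toReal ≤ ((n : ℝ) + 1) / 2 := by
      intro n hn
      haveI := hprob n
      obtain ⟨-, h1, h2⟩ := main_real (μ n) n (ξ n) (K n) (hξm n) (hξi n) (hξh n)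
        (hKm n) (hKlt n (by omega)) (hKu n (by omega)) (hKξ n) (Z n) (hZm n)
        (hZ0 n) (hZrec n) hn
      exact ⟨h1, h2⟩
    refine tendsto_of_tendsto_of_tendsto_of_le_of_le'
      (g := fun n : ℕ => 1 - 5 / (n : ℝ)) (h := fun n : ℕ => 1 + 1 / (n : ℝ)) ?_ ?_ ?_ ?_
    · have h0 : Tendsto (fun n : ℕ => 5 / (n : ℝ)) atTop (nhds 0) :=
        Tendsto.div_atTop tendsto_const_nhds tendsto_natCast_atTop_atTop
      have := Tendsto.sub (tendsto_const_nhds (x := (1:ℝ)) (f := atTop)) h0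
      simpa using this
    · have h0 : Tendsto (fun n : ℕ => 1 / (n : ℝ)) atTop (nhds 0) :=
        Tendsto.div_atTop tendsto_const_nhds tendsto_natCast_atTop_atTop
      have := Tendsto.add (tendsto_const_nhds (x := (1:ℝ)) (f := atTop)) h0
      simpa using this
    · filter_upwards [eventually_ge_atTop 2] with n hn
      obtain ⟨h1, -⟩ := hbnd n hn
      have hn2 : (2 : ℝ) ≤ (n : ℝ) := by exact_mod_cast hn
      have hnpos : (0 : ℝ) < (n : ℝ) / 2 := by linarith
      rw [le_div_iff₀ hnpos]
      have : (1 - 5 / (n : ℝ)) * ((n : ℝ) / 2) = ((n : ℝ) - 5) / 2 := by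
        field_simp
      rw [this]
      exact h1
    · filter_upwards [eventually_ge_atTop 2] with n hn
      obtain ⟨-, h2⟩ := hbnd n hn
      have hn2 : (2 : ℝ) ≤ (n : ℝ) := by exact_mod_cast hn
      have hnpos : (0 : ℝ) < (n : ℝ) / 2 := by linarith
      rw [div_le_iff₀ hnpos]
      have : (1 + 1 / (n : ℝ)) * ((n : ℝ) / 2) = ((n : ℝ) + 1) / 2 := by
        field_simp
      rw [this]
      exact h2
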